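/- Let p and q be real polynomials with deg q < deg p. If p has only simple real zeros, then there exists ε > 0 such that for every real b with |b| < ε, the polynomial p + b·q has only real zeros. -/

import Mathlib

open Polynomial

/-- If a real polynomial has `natDegree` many distinct real roots, its real roots
multiset has full cardinality. -/
lemma roots_card_of_finset (f : Polynomial ℝ) (hf : f ≠ 0) (T : Finset ℝ)
    (hT : ∀ r ∈ T, f.IsRoot r) (hcard : f.natDegree ≤ T.card) :
    (f.roots).card = f.natDegree := by
  have hle : T.val ≤ f.roots := by
    rw [Multiset.le_iff_count]
    intro a
    by_cases ha : a ∈ T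
    · have h1 : T.val.count a = 1 := by
        rw [Multiset.count_eq_one_of_mem T.nodup ha]
      rw [h1, count_roots]
      exact (rootMultiplicity_pos hf).mpr (hT a ha)
    · simp [Multiset.count_eq_zero_of_notMem, ha]
  have := Multiset.card_le_card hle
  rw [Finset.card] at hcard
  exact le_antisymm (card_roots' f) (le_trans hcard this)

/-- If the real roots of a real polynomial have full cardinality, all complex roots
are real. -/
lemma im_eq_zero_of_roots_card (f : Polynomial ℝ) (hf : f ≠ 0)
    (h : (f.roots).card = f.natDegree) :
    ∀ z : ℂ, Polynomial.aeval z f = 0 → z.im = 0 := by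
  intro z hz
  have hsplit : f.Splits := splits_iff_card_roots.mpr h
  have hmap : (f.map (algebraMap ℝ ℂ)).roots = f.roots.map (algebraMap ℝ ℂ) :=
    hsplit.roots_map _
  have hf' : f.map (algebraMap ℝ ℂ) ≠ 0 := by
    simpa using (Polynomial.map_ne_zero_iff (algebraMap ℝ ℂ).injective).mpr hf
  have hzr : z ∈ (f.map (algebraMap ℝ ℂ)).roots := by
    rw [mem_roots hf', IsRoot, eval_map]
    exact hz
  rw [hmap, Multiset.mem_map] at hzr
  obtain ⟨r, _, hr⟩ := hzr
  rw [← hr]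
  simp [Complex.coe_algebraMap]

lemma exists_gap (S : Finset ℝ) : ∃ c > 0, ∀ r ∈ S, ∀ r' ∈ S, r ≠ r' → c ≤ |r - r'| := by
  classical
  set D := ((S ×ˢ S).filter fun x => x.1 ≠ x.2).image fun x => |x.1 - x.2| with hD
  by_cases hne : D.Nonempty
  · refine ⟨D.min' hne, ?_, ?_⟩
    · have hmem := D.min'_mem hne
      obtain ⟨⟨r, r'⟩, hrr, hval⟩ := Finset.mem_image.mp hmem
      rw [Finset.mem_filter] at hrr
      rw [← hval]
      exact abs_pos.mpr (sub_ne_zero.mpr hrr.2)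
    · intro r hr r' hr' hne'
      apply D.min'_le
      rw [hD, Finset.mem_image]
      exact ⟨(r, r'), Finset.mem_filter.mpr ⟨Finset.mem_product.mpr ⟨hr, hr'⟩, hne'⟩, rfl⟩
  · refine ⟨1, one_pos, ?_⟩
    intro r hr r' hr' hne'
    exfalso
    exact hne ⟨|r - r'|, Finset.mem_image.mpr
      ⟨(r, r'), Finset.mem_filter.mpr ⟨Finset.mem_product.mpr ⟨hr, hr'⟩, hne'⟩, rfl⟩⟩

lemma same_sign_of_close' {u v : ℝ} (h : |u - v| < |v|) : 0 < u * v := by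
  rcases abs_lt.mp h with ⟨h1, h2⟩
  rcases lt_trichotomy v 0 with hv | hv | hv
  · nlinarith [abs_of_neg hv]
  · exfalso; rw [hv] at h; simp at h; exact absurd h (not_lt.mpr (abs_nonneg _))
  · nlinarith [abs_of_pos hv]

lemma exists_root_of_sign_change {f : ℝ → ℝ} (hf : Continuous f) {a b : ℝ}
    (hab : a < b) (h : f a * f b < 0) : ∃ x ∈ Set.Ioo a b, f x = 0 := by
  rcases mul_neg_iff.mp h with ⟨ha, hb⟩ | ⟨ha, hb⟩
  · have := intermediate_value_Ioo' hab.le hf.continuousOn (a := a) (b := b)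
    have h0 : (0 : ℝ) ∈ Set.Ioo (f b) (f a) := ⟨hb, ha⟩
    obtain ⟨x, hx, hfx⟩ := this h0
    exact ⟨x, hx, hfx⟩
  · have := intermediate_value_Ioo hab.le hf.continuousOn (a := a) (b := b)
    have h0 : (0 : ℝ) ∈ Set.Ioo (f a) (f b) := ⟨ha, hb⟩
    obtain ⟨x, hx, hfx⟩ := this h0
    exact ⟨x, hx, hfx⟩

lemma local_sign (p : Polynomial ℝ) (hsq : Squarefree p) {r : ℝ} (hr : p.IsRoot r) :
    ∃ δ > 0, ∀ d : ℝ, 0 < d → d < δ →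
      p.eval (r - d) * p.eval (r + d) < 0 := by
  obtain ⟨g, hfac, hgr⟩ := by
    exact (by
      refine ⟨p /ₘ (X - C r), ((mul_divByMonic_eq_iff_isRoot).mpr hr).symm, ?_⟩
      intro hg
      have hdvd : (X - C r) ∣ p /ₘ (X - C r) := dvd_iff_isRoot.mpr hg
      have h2 : (X - C r) * (X - C r) ∣ p := by
        calc (X - C r) * (X - C r) ∣ (X - C r) * (p /ₘ (X - C r)) :=
              mul_dvd_mul_left _ hdvd
          _ = p := (mul_divByMonic_eq_iff_isRoot).mpr hr
      exact (Polynomial.not_isUnit_X_sub_C r) (hsq _ h2) :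
      ∃ g : Polynomial ℝ, p = (X - C r) * g ∧ g.eval r ≠ 0)
  have hcont : ContinuousAt (fun x => g.eval x) r := (Polynomial.continuous g).continuousAt
  have habs : 0 < |g.eval r| / 2 := by positivity
  obtain ⟨δ, hδ0, hδ⟩ := Metric.continuousAt_iff.mp hcont (|g.eval r| / 2) habs
  refine ⟨δ, hδ0, ?_⟩
  intro d hd0 hdδ
  have hclose : ∀ x : ℝ, |x - r| < δ → 0 < g.eval x * g.eval r := by
    intro x hx
    have := hδ (by rwa [Real.dist_eq] : dist x r < δ)
    rw [Real.dist_eq] at this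
    apply same_sign_of_close'
    calc |g.eval x - g.eval r| < |g.eval r| / 2 := this
      _ < |g.eval r| := by linarith [habs]
  have hb1 : |r - d - r| < δ := by
    rw [show r - d - r = -d by ring, abs_neg, abs_of_pos hd0]; exact hdδ
  have hb2 : |r + d - r| < δ := by
    rw [show r + d - r = d by ring, abs_of_pos hd0]; exact hdδ
  have h1 : 0 < g.eval (r - d) * g.eval r := hclose _ hb1
  have h2 : 0 < g.eval (r + d) * g.eval r := hclose _ hb2
  have e1 : p.eval (r - d) = -d * g.eval (r - d) := by rw [hfac]; simp; try ring
  have e2 : p.eval (r + d) = d * g.eval (r + d) := by rw [hfac]; simp; try ring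
  rw [e1, e2]
  nlinarith [mul_pos h1 h2, sq_nonneg (g.eval r), mul_pos hd0 hd0]

lemma real_roots_full (p : Polynomial ℝ) (hp0 : p ≠ 0) (hsq : Squarefree p)
    (hreal : ∀ z : ℂ, Polynomial.aeval z p = 0 → z.im = 0) :
    (p.roots).card = p.natDegree := by
  classical
  have hsep : p.Separable := PerfectField.separable_iff_squarefree.mpr hsq
  set pc := p.map (algebraMap ℝ ℂ) with hpc
  have hpc0 : pc ≠ 0 := (Polynomial.map_ne_zero_iff (algebraMap ℝ ℂ).injective).mpr hp0
  have hcard : p.natDegree = pc.roots.card :=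
    (natDegree_map (algebraMap ℝ ℂ)).symm.trans (IsAlgClosed.splits pc).natDegree_eq_card_roots
  have hnodupC : pc.roots.Nodup := nodup_roots (hsep.map)
  -- every complex root is of the form ↑r with (r : ℝ) a root of p
  set T : Finset ℂ := pc.roots.toFinset with hT
  have hTcard : T.card = p.natDegree := by
    rw [hT, Multiset.toFinset_card_of_nodup hnodupC, hcard]
  have hmem : ∀ z ∈ T, z = ((z.re : ℝ) : ℂ) ∧ p.IsRoot z.re := by
    intro z hz
    rw [hT, Multiset.mem_toFinset, mem_roots hpc0, IsRoot, hpc, eval_map] at hz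
    have hz' : Polynomial.aeval z p = 0 := hz
    have him : z.im = 0 := hreal z hz'
    have hre : z = ((z.re : ℝ) : ℂ) := by
      apply Complex.ext <;> simp [him]
    constructor
    · exact hre
    · have : Polynomial.aeval ((z.re : ℝ) : ℂ) p = 0 := by rw [← hre]; exact hz'
      have h2 : Polynomial.aeval (algebraMap ℝ ℂ z.re) p = algebraMap ℝ ℂ (p.eval z.re) :=
        eval₂_at_apply (algebraMap ℝ ℂ) z.re
      rw [show ((z.re : ℝ) : ℂ) = algebraMap ℝ ℂ z.re from rfl, h2] at this
      exact (map_eq_zero_iff _ (algebraMap ℝ ℂ).injective).mp this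
  set S : Finset ℝ := T.image Complex.re with hS
  have hScard : S.card = p.natDegree := by
    rw [hS, Finset.card_image_of_injOn, hTcard]
    intro a ha b hb hab
    rw [(hmem a ha).1, (hmem b hb).1, hab]
  exact roots_card_of_finset p hp0 S
    (by
      intro r hr
      rw [hS, Finset.mem_image] at hr
      obtain ⟨z, hz, rfl⟩ := hr
      exact (hmem z hz).2)
    hScard.ge
theorem perturbation_real_rooted (p q : Polynomial ℝ) (hdeg : q.degree < p.degree)
    (hp0 : p ≠ 0) (hsq : Squarefree p)
    (hreal : ∀ z : ℂ, Polynomial.aeval z p = 0 → z.im = 0) :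
    ∃ ε > 0, ∀ b : ℝ, |b| < ε →
      ∀ z : ℂ, Polynomial.aeval z (p + C b * q) = 0 → z.im = 0 := by
  classical
  by_cases hn : p.natDegree = 0
  · -- then q = 0 and the statement is trivial
    have hq0 : q = 0 := by
      have hpd : p.degree = 0 := (degree_eq_natDegree hp0).trans (by rw [hn]; rfl)
      rw [hpd] at hdeg
      exact degree_eq_bot.mp (Nat.WithBot.lt_zero_iff.mp hdeg)
    refine ⟨1, one_pos, ?_⟩
    intro b _ z hz
    rw [hq0] at hz
    simp only [mul_zero, add_zero] at hz
    exact hreal z hz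
  -- main case
  have hsep : p.Separable := PerfectField.separable_iff_squarefree.mpr hsq
  have hrc : (p.roots).card = p.natDegree := real_roots_full p hp0 hsq hreal
  have hnodup : p.roots.Nodup := nodup_roots hsep
  set S : Finset ℝ := p.roots.toFinset with hSdef
  have hScard : S.card = p.natDegree := by
    rw [hSdef, Multiset.toFinset_card_of_nodup hnodup, hrc]
  have hSne : S.Nonempty := by
    rw [← Finset.card_pos, hScard]
    exact Nat.pos_of_ne_zero hn
  have hSroot : ∀ r ∈ S, p.IsRoot r := by
    intro r hr
    rw [hSdef, Multiset.mem_toFinset] at hr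
    exact (mem_roots hp0).mp hr
  obtain ⟨c, hc0, hc⟩ := exists_gap S
  -- choose a local sign-change radius for each root
  have hloc : ∀ r : ℝ, ∃ δ > 0, r ∈ S → ∀ d : ℝ, 0 < d → d < δ →
      p.eval (r - d) * p.eval (r + d) < 0 := by
    intro r
    by_cases hr : r ∈ S
    · obtain ⟨δ, hδ0, hδ⟩ := local_sign p hsq (hSroot r hr)
      exact ⟨δ, hδ0, fun _ => hδ⟩
    · exact ⟨1, one_pos, fun h => absurd h hr⟩
  choose δ hδ0 hδ using hloc
  set d : ℝ → ℝ := fun r => min (δ r / 2) (c / 3) with hddef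
  have hd0 : ∀ r, 0 < d r := fun r => lt_min (by linarith [hδ0 r]) (by linarith)
  have hdδ : ∀ r, d r < δ r := fun r =>
    lt_of_le_of_lt (min_le_left _ _) (by linarith [hδ0 r])
  have hdc : ∀ r, d r ≤ c / 3 := fun r => min_le_right _ _
  have hsign : ∀ r ∈ S, p.eval (r - d r) * p.eval (r + d r) < 0 :=
    fun r hr => hδ r hr (d r) (hd0 r) (hdδ r)
  -- the perturbation bound
  set m : ℝ → ℝ := fun r => min |p.eval (r - d r)| |p.eval (r + d r)| with hmdef
  set D : ℝ → ℝ := fun r => |q.eval (r - d r)| + |q.eval (r + d r)| + 1 with hDdef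
  have hm0 : ∀ r ∈ S, 0 < m r := by
    intro r hr
    have hs := hsign r hr
    have h1 : p.eval (r - d r) ≠ 0 := fun h => by rw [h] at hs; simp at hs
    have h2 : p.eval (r + d r) ≠ 0 := fun h => by rw [h] at hs; simp at hs
    exact lt_min (abs_pos.mpr h1) (abs_pos.mpr h2)
  have hD0 : ∀ r, 0 < D r := fun r => by positivity
  refine ⟨S.inf' hSne (fun r => m r / D r), ?_, ?_⟩
  · rw [gt_iff_lt, Finset.lt_inf'_iff]
    exact fun r hr => div_pos (hm0 r hr) (hD0 r)
  intro b hb z hz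
  set f : Polynomial ℝ := p + C b * q with hfdef
  -- degree facts
  have hdegf : f.degree = p.degree := by
    apply degree_add_eq_left_of_degree_lt
    calc (C b * q).degree ≤ (C b).degree + q.degree := degree_mul_le _ _
      _ ≤ 0 + q.degree := add_le_add (degree_C_le) le_rfl
      _ = q.degree := zero_add _
      _ < p.degree := hdeg
  have hf0 : f ≠ 0 := by
    intro h
    rw [h, degree_zero] at hdegf
    exact hp0 (degree_eq_bot.mp hdegf.symm)
  have hnf : f.natDegree = p.natDegree := natDegree_eq_of_degree_eq hdegf
  -- sign changes persist
  have hεle : ∀ r ∈ S, S.inf' hSne (fun r => m r / D r) ≤ m r / D r :=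
    fun r hr => Finset.inf'_le _ hr
  have hpert : ∀ r ∈ S, ∀ x ∈ ({r - d r, r + d r} : Set ℝ),
      |f.eval x - p.eval x| < |p.eval x| := by
    intro r hr x hx
    have hqx : |q.eval x| ≤ |q.eval (r - d r)| + |q.eval (r + d r)| := by
      rcases hx with rfl | rfl
      · linarith [abs_nonneg (q.eval (r + d r))]
      · linarith [abs_nonneg (q.eval (r - d r))]
    have hfx : f.eval x - p.eval x = b * q.eval x := by rw [hfdef]; simp only [eval_add, eval_mul, eval_C]; ring
    rw [hfx, abs_mul]
    have h1 : |b| * |q.eval x| ≤ |b| * D r := by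
      apply mul_le_mul_of_nonneg_left _ (abs_nonneg b)
      rw [hDdef]; dsimp only; linarith
    have h2 : |b| * D r < m r :=
      (lt_div_iff₀ (hD0 r)).mp (lt_of_lt_of_le hb (hεle r hr))
    have h4 : m r ≤ |p.eval x| := by
      rcases hx with rfl | rfl
      · exact min_le_left _ _
      · exact min_le_right _ _
    linarith
  have hfsign : ∀ r ∈ S, f.eval (r - d r) * f.eval (r + d r) < 0 := by
    intro r hr
    have ha := same_sign_of_close' (hpert r hr (r - d r) (by left; rfl))
    have hb' := same_sign_of_close' (hpert r hr (r + d r) (by right; rfl))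
    have hs := hsign r hr
    nlinarith [mul_pos ha hb']
  -- a root of f in each interval
  have hx : ∀ r : ℝ, ∃ x : ℝ, r ∈ S →
      x ∈ Set.Ioo (r - d r) (r + d r) ∧ f.eval x = 0 := by
    intro r
    by_cases hr : r ∈ S
    · obtain ⟨x, hx1, hx2⟩ := exists_root_of_sign_change (Polynomial.continuous f)
        (by linarith [hd0 r] : r - d r < r + d r) (hfsign r hr)
      exact ⟨x, fun _ => ⟨hx1, hx2⟩⟩
    · exact ⟨0, fun h => absurd h hr⟩
  choose x hxP using hx
  have hxdist : ∀ r ∈ S, |x r - r| < d r := by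
    intro r hr
    obtain ⟨⟨h1, h2⟩, _⟩ := hxP r hr
    rw [abs_lt]; constructor <;> linarith
  have hinj : Set.InjOn x S := by
    intro r hr r' hr' hxx
    by_contra hne
    have h1 := hxdist r hr
    have h2 := hxdist r' hr'
    have h3 := hc r hr r' hr' hne
    have : |r - r'| ≤ |x r - r| + |x r' - r'| := by
      rw [hxx]
      calc |r - r'| = |(r - x r') + (x r' - r')| := by ring_nf
        _ ≤ |r - x r'| + |x r' - r'| := abs_add_le _ _
        _ = |x r' - r| + |x r' - r'| := by rw [abs_sub_comm]
    have hd1 := hdc r; have hd2 := hdc r'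
    linarith
  set T : Finset ℝ := S.image x with hTdef
  have hTcard : T.card = p.natDegree := by
    rw [hTdef, Finset.card_image_of_injOn hinj, hScard]
  have hTroot : ∀ t ∈ T, f.IsRoot t := by
    intro t ht
    rw [hTdef, Finset.mem_image] at ht
    obtain ⟨r, hr, rfl⟩ := ht
    exact (hxP r hr).2
  have hfull : (f.roots).card = f.natDegree :=
    roots_card_of_finset f hf0 T hTroot (by rw [hTcard, hnf])
  exact im_eq_zero_of_roots_card f hf0 hfull z hz
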